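/- If f ∈ C_l([0,∞]) satisfies Cf = λf for some λ ≠ 0, then λ = 1 and f is constant; that is, the point spectrum of the Cesàro operator on C_l([0,∞]) restricted to nonzero eigenvalues is exactly {1} with eigenspace the constants. -/

import Mathlib

open MeasureTheory

/-- The Cesàro average: `ces f x = (1/x) ∫₀ˣ f(t) dt` for `x ≠ 0`, `ces f 0 = f 0`. -/
noncomputable def ces (f : ℝ → ℂ) (x : ℝ) : ℂ :=
  if x = 0 then f 0 else (∫ t in (0:ℝ)..x, f t) / (x : ℂ)

/-- A function with zero derivative on `(0,∞)` is constant there. -/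
lemma const_of_deriv_zero_Ioi {g : ℝ → ℂ} (h : ∀ x ∈ Set.Ioi (0:ℝ), HasDerivAt g 0 x) :
    ∀ x ∈ Set.Ioi (0:ℝ), g x = g 1 := by
  intro x hx
  apply (convex_Ioi (0:ℝ)).is_const_of_fderivWithin_eq_zero
    (fun y hy => ((h y hy).differentiableAt).differentiableWithinAt) ?_ hx (by norm_num)
  intro y hy
  rw [fderivWithin_of_isOpen isOpen_Ioi hy, (h y hy).hasFDerivAt.fderiv]
  ext t
  simp

/-- In `C_l([0,∞])` (continuous functions on `[0,∞)` with a limit at infinity), the only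
nonzero eigenvalue of the Cesàro operator is `1`, with eigenspace the constants. -/
theorem cesaro_Cl_point_spectrum (f : ℝ → ℂ) (hf : ContinuousOn f (Set.Ici 0))
    (hlim : ∃ L : ℂ, Filter.Tendsto f Filter.atTop (nhds L))
    (hne : ∃ x ∈ Set.Ici (0:ℝ), f x ≠ 0)
    (l : ℂ) (hl : l ≠ 0)
    (heig : ∀ x ∈ Set.Ici (0:ℝ), ces f x = l * f x) :
    l = 1 ∧ ∃ c : ℂ, ∀ x ∈ Set.Ici (0:ℝ), f x = c := by
  obtain ⟨L, hL⟩ := hlim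
  have hca : ∀ x : ℝ, 0 < x → ContinuousAt f x := fun x hx =>
    hf.continuousAt (Filter.mem_of_superset (Ioi_mem_nhds hx) Set.Ioi_subset_Ici_self)
  set F : ℝ → ℂ := fun x => ∫ t in (0:ℝ)..x, f t with hFdef
  have hFeq : ∀ x : ℝ, 0 < x → F x = l * x * f x := by
    intro x hx
    have h := heig x (le_of_lt hx)
    rw [ces, if_neg (ne_of_gt hx)] at h
    have hx0 : (x:ℂ) ≠ 0 := by exact_mod_cast hx.ne'
    field_simp at h
    simp only [hFdef]
    rw [h]; ring
  have hFderiv : ∀ x : ℝ, 0 < x → HasDerivAt F (f x) x := by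
    intro x hx
    apply intervalIntegral.integral_hasDerivAt_right
    · apply ContinuousOn.intervalIntegrable
      apply hf.mono
      rw [Set.uIcc_of_le hx.le]
      exact fun t ht => ht.1
    · exact ContinuousAt.stronglyMeasurableAtFilter isOpen_Ioi (fun y hy => hca y hy) x hx
    · exact hca x hx
  -- f is differentiable on (0,∞) with f' = (1-l)/(l x) * f x
  have hfderiv : ∀ x : ℝ, 0 < x → HasDerivAt f ((1 - l) / (l * x) * f x) x := by
    intro x hx
    have hx0 : (x:ℂ) ≠ 0 := by exact_mod_cast hx.ne'
    have h1 : HasDerivAt (fun y : ℝ => (y:ℂ)) 1 x := by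
      simpa using (hasDerivAt_id x).ofReal_comp
    have h1' : HasDerivAt (fun y : ℝ => l * (y:ℂ)) l x := by
      simpa using h1.const_mul l
    have h2 : HasDerivAt (fun y : ℝ => F y / (l * (y:ℂ)))
        ((f x * (l * x) - F x * l) / (l * x) ^ 2) x :=
      (hFderiv x hx).div h1' (by exact mul_ne_zero hl hx0)
    have hev : (fun y : ℝ => F y / (l * (y:ℂ))) =ᶠ[nhds x] f := by
      filter_upwards [Ioi_mem_nhds hx] with y hy
      have hy0 : (y:ℂ) ≠ 0 := by exact_mod_cast (ne_of_gt hy)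
      rw [hFeq y hy]
      field_simp
    have h3 := h2.congr_of_eventuallyEq hev.symm
    refine h3.congr_deriv ?_
    rw [hFeq x hx]
    field_simp
  have hf00 : ces f 0 = f 0 := by rw [ces, if_pos rfl]
  have hf0eig : f 0 = l * f 0 := by
    have := heig 0 (Set.mem_Ici.mpr le_rfl); rwa [hf00] at this
  by_cases hl1 : l = 1
  · -- eigenvalue 1 : derivative is 0, so f is constant
    subst hl1
    have hzero : ∀ x ∈ Set.Ioi (0:ℝ), HasDerivAt f 0 x := by
      intro x hx
      simpa using hfderiv x hx
    have hconst := const_of_deriv_zero_Ioi hzero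
    refine ⟨rfl, f 1, fun x hx => ?_⟩
    rcases eq_or_lt_of_le (Set.mem_Ici.mp hx) with h | h
    · -- x = 0 : use continuity
      have hcw : Filter.Tendsto f (nhdsWithin 0 (Set.Ioi 0)) (nhds (f 0)) :=
        ((hf 0 (Set.mem_Ici.mpr le_rfl)).mono Set.Ioi_subset_Ici_self).tendsto
      have hcw' : Filter.Tendsto f (nhdsWithin 0 (Set.Ioi 0)) (nhds (f 1)) := by
        apply Filter.Tendsto.congr' _ tendsto_const_nhds
        filter_upwards [self_mem_nhdsWithin] with y hy
        exact (hconst y hy).symm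
      rw [← h]
      exact tendsto_nhds_unique hcw hcw'
    · exact hconst x h
  · -- eigenvalue ≠ 1 : contradiction
    exfalso
    have hf0 : f 0 = 0 := by
      have : (1 - l) * f 0 = 0 := by linear_combination hf0eig
      rcases mul_eq_zero.1 this with h | h
      · exact absurd (by linear_combination -h : l = 1) hl1
      · exact h
    set α : ℂ := (1 - l) / l with hα
    have hα0 : α ≠ 0 :=
      div_ne_zero (sub_ne_zero.2 (fun h => hl1 h.symm)) hl
    -- the auxiliary function g x = f x * x ^ (-α) has zero derivative on (0,∞)
    have hgzero : ∀ x ∈ Set.Ioi (0:ℝ), HasDerivAt (fun y : ℝ => f y * (y:ℂ) ^ (-α)) 0 x := by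
      intro x hx
      have hx' : (0:ℝ) < x := hx
      have hx0 : (x:ℂ) ≠ 0 := by exact_mod_cast hx'.ne'
      have hr : -α - 1 ≠ -1 := by
        intro h; exact hα0 (by linear_combination -h)
      have hp0 := hasDerivAt_ofReal_cpow_const' (ne_of_gt hx') hr
      rw [show -α - 1 + 1 = -α by ring] at hp0
      have hp1 : HasDerivAt (fun y : ℝ => (y:ℂ) ^ (-α)) (-α * (x:ℂ) ^ (-α - 1)) x := by
        have := hp0.const_mul (-α)
        apply this.congr_of_eventuallyEq
        apply Filter.Eventually.of_forall
        intro y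
        field_simp
      have hsum := (hfderiv x hx').mul hp1
      refine hsum.congr_deriv ?_
      have hc1 : (x:ℂ) ^ (-α - 1) = (x:ℂ) ^ (-α) / x := by
        rw [Complex.cpow_sub _ _ hx0, Complex.cpow_one]
      rw [hc1, hα]
      field_simp
      ring
    have hconst := const_of_deriv_zero_Ioi hgzero
    set c : ℂ := f 1 with hc
    -- f x = c * x^α on (0,∞)
    have hfx : ∀ x : ℝ, 0 < x → f x = c * (x:ℂ) ^ α := by
      intro x hx
      have h := hconst x hx
      simp only [Complex.ofReal_one, Complex.one_cpow, mul_one] at h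
      have hx0 : (x:ℂ) ≠ 0 := by exact_mod_cast hx.ne'
      have hxa : (x:ℂ) ^ (-α) ≠ 0 := by
        simp [Complex.cpow_eq_zero_iff, hx0]
      have := congrArg (fun z => z * (x:ℂ) ^ α) h
      simpa [mul_assoc, ← Complex.cpow_add _ _ hx0, Complex.cpow_zero] using this
    -- |f x| = |c| * x ^ α.re for x > 0
    have habs : ∀ x : ℝ, 0 < x → ‖f x‖ = ‖c‖ * x ^ α.re := by
      intro x hx
      rw [hfx x hx, norm_mul, Complex.norm_cpow_eq_rpow_re_of_pos hx]
    have hc0 : c = 0 := by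
      rcases le_or_gt α.re 0 with hre | hre
      · -- near 0, |f| ≥ |c| but f → 0
        have hcw : Filter.Tendsto f (nhdsWithin 0 (Set.Ioi 0)) (nhds 0) := by
          rw [← hf0]
          exact ((hf 0 (Set.mem_Ici.mpr le_rfl)).mono Set.Ioi_subset_Ici_self).tendsto
        have habs' : Filter.Tendsto (fun x => ‖f x‖)
            (nhdsWithin 0 (Set.Ioi 0)) (nhds 0) := by
          simpa [Function.comp_def] using (continuous_norm.tendsto 0).comp hcw
        have hev : ∀ᶠ x in nhdsWithin (0:ℝ) (Set.Ioi 0),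
            ‖c‖ ≤ ‖f x‖ := by
          filter_upwards [Ioo_mem_nhdsGT_of_mem
            (Set.mem_Ico.2 ⟨le_rfl, zero_lt_one⟩)] with x hx
          rw [habs x hx.1]
          nlinarith [Real.one_le_rpow_of_pos_of_le_one_of_nonpos hx.1 hx.2.le hre,
            norm_nonneg c]
        have : ‖c‖ ≤ 0 := ge_of_tendsto habs' hev
        exact norm_eq_zero.mp (le_antisymm this (norm_nonneg c))
      · -- at ∞, |f| → |L| but |c| x^{re α} → ∞
        by_contra hcne
        have h1 : Filter.Tendsto (fun x : ℝ => ‖c‖ * x ^ α.re)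
            Filter.atTop Filter.atTop :=
          Filter.Tendsto.const_mul_atTop (norm_pos_iff.mpr hcne) (tendsto_rpow_atTop hre)
        have h2 : Filter.Tendsto (fun x => ‖f x‖) Filter.atTop Filter.atTop := by
          apply h1.congr'
          filter_upwards [Filter.eventually_gt_atTop 0] with x hx
          exact (habs x hx).symm
        exact not_tendsto_atTop_of_tendsto_nhds
          ((continuous_norm.tendsto L).comp hL) h2
    obtain ⟨x, hx, hfxne⟩ := hne
    rcases eq_or_lt_of_le (Set.mem_Ici.mp hx) with h | h
    · exact hfxne (by rw [← h, hf0])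
    · exact hfxne (by rw [hfx x h, hc0, zero_mul])
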